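/- arXiv:2210.07277 — 5 statements merged into one kernel-verified Lean document; each statement's English description precedes it below -/
import Mathlib

section
/- Let x_1, ..., x_N be points in ℝ^D and let K ≥ 1. Then the infimum over all centroid tuples (μ_1, ..., μ_K) ∈ (ℝ^D)^K of ∑_{n=1}^N min_{c ∈ {1,...,K}} ‖x_n − μ_c‖² equals the minimum over all assignment functions a : {1,...,N} → {1,...,K} of ∑_{k : a^{-1}(k) ≠ ∅} ∑_{n ∈ a^{-1}(k)} ‖x_n − μ*_k(a)‖², where μ*_k(a) = (1/|a^{-1}(k)|) ∑_{n ∈ a^{-1}(k)} x_n is the mean of the points assigned to cluster k. In particular the infimum over centroids is attained. -/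
open Finset

lemma mean_min {E : Type*} [NormedAddCommGroup E] [InnerProductSpace ℝ E] {ι : Type*}
    (S : Finset ι) (x : ι → E) (c : E) :
    ∑ n ∈ S, ‖x n - (S.card : ℝ)⁻¹ • ∑ m ∈ S, x m‖ ^ 2 ≤ ∑ n ∈ S, ‖x n - c‖ ^ 2 := by
  rcases S.eq_empty_or_nonempty with rfl | hS
  · simp
  set m := (S.card : ℝ)⁻¹ • ∑ m ∈ S, x m with hm
  have hcard : (S.card : ℝ) ≠ 0 := Nat.cast_ne_zero.2 hS.card_ne_zero
  have hsum : ∑ n ∈ S, (x n - m) = 0 := by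
    rw [Finset.sum_sub_distrib, Finset.sum_const, sub_eq_zero, hm,
      ← Nat.cast_smul_eq_nsmul ℝ, smul_inv_smul₀ hcard]
  have key : ∀ n, ‖x n - c‖ ^ 2
      = ‖x n - m‖ ^ 2 + 2 * inner ℝ (x n - m) (m - c) + ‖m - c‖ ^ 2 := by
    intro n
    have : x n - c = (x n - m) + (m - c) := by abel
    rw [this, @norm_add_sq_real]
  calc ∑ n ∈ S, ‖x n - m‖ ^ 2
      ≤ ∑ n ∈ S, ‖x n - m‖ ^ 2 + (2 * inner ℝ (∑ n ∈ S, (x n - m)) (m - c)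
          + S.card * ‖m - c‖ ^ 2) := by
        rw [hsum, inner_zero_left]
        have : (0:ℝ) ≤ S.card * ‖m - c‖ ^ 2 := by positivity
        linarith
    _ = ∑ n ∈ S, ‖x n - c‖ ^ 2 := by
        rw [Finset.sum_congr rfl fun n _ => key n, Finset.sum_add_distrib,
          Finset.sum_add_distrib, sum_inner, Finset.sum_const, Finset.mul_sum]
        ring

/-- The mean of the points assigned to cluster `k` by the assignment `a`
(`μ*_k(a)` in the statement). -/
noncomputable def clusterMean {D N K : ℕ} (x : Fin N → EuclideanSpace ℝ (Fin D))
    (a : Fin N → Fin K) (k : Fin K) : EuclideanSpace ℝ (Fin D) :=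
  ((Finset.univ.filter fun n => a n = k).card : ℝ)⁻¹ •
    ∑ n ∈ Finset.univ.filter fun n => a n = k, x n

/-- The K-means objective of an assignment `a`: the sum, over nonempty clusters, of the
squared distances of the cluster's members to the cluster mean. -/
noncomputable def partitionObjective {D N K : ℕ} (x : Fin N → EuclideanSpace ℝ (Fin D))
    (a : Fin N → Fin K) : ℝ :=
  ∑ k ∈ Finset.univ.filter fun k => (Finset.univ.filter fun n => a n = k).Nonempty,
    ∑ n ∈ Finset.univ.filter fun n => a n = k, ‖x n - clusterMean x a k‖ ^ 2

/-- The infimum over centroid tuples `(μ_1, ..., μ_K)` of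
`∑ n, min_c ‖x n - μ c‖²` equals the minimum over assignment functions `a` of the
sum over nonempty clusters of squared distances to the cluster means; and the
infimum over centroids is attained. -/
theorem kmeans_explicit_eq_partition {D N K : ℕ} (hK : 1 ≤ K)
    (x : Fin N → EuclideanSpace ℝ (Fin D)) :
    ((⨅ μ : Fin K → EuclideanSpace ℝ (Fin D), ∑ n, ⨅ c, ‖x n - μ c‖ ^ 2)
        = ⨅ a : Fin N → Fin K, partitionObjective x a) ∧
      ∃ μ : Fin K → EuclideanSpace ℝ (Fin D),
        (∑ n, ⨅ c, ‖x n - μ c‖ ^ 2)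
          = ⨅ μ' : Fin K → EuclideanSpace ℝ (Fin D), ∑ n, ⨅ c, ‖x n - μ' c‖ ^ 2 := by
  haveI : NeZero K := ⟨by omega⟩
  set F : (Fin K → EuclideanSpace ℝ (Fin D)) → ℝ :=
    fun μ => ∑ n, ⨅ c, ‖x n - μ c‖ ^ 2 with hF
  -- boundedness below
  have hbdd : BddBelow (Set.range F) := by
    refine ⟨0, ?_⟩
    rintro _ ⟨μ, rfl⟩
    exact Finset.sum_nonneg fun n _ => Real.iInf_nonneg fun c => by positivity
  -- for each μ & n, the inner infimum is attained
  have hinner : ∀ (μ : Fin K → EuclideanSpace ℝ (Fin D)) (n : Fin N),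
      ∃ c : Fin K, (⨅ c, ‖x n - μ c‖ ^ 2) = ‖x n - μ c‖ ^ 2 := by
    intro μ n
    obtain ⟨c₀, hc₀⟩ := Finite.exists_min fun c => ‖x n - μ c‖ ^ 2
    exact ⟨c₀, le_antisymm (ciInf_le (Finite.bddBelow_range _) c₀) (le_ciInf hc₀)⟩
  -- grouping: for any μ and a, ∑ n ‖x n - μ (a n)‖² = sum over nonempty clusters
  have hgroup : ∀ (μ : Fin K → EuclideanSpace ℝ (Fin D)) (a : Fin N → Fin K),
      ∑ n, ‖x n - μ (a n)‖ ^ 2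
        = ∑ k ∈ Finset.univ.filter fun k => (Finset.univ.filter fun n => a n = k).Nonempty,
            ∑ n ∈ Finset.univ.filter fun n => a n = k, ‖x n - μ k‖ ^ 2 := by
    intro μ a
    have h1 : ∑ n, ‖x n - μ (a n)‖ ^ 2
        = ∑ k : Fin K, ∑ n ∈ Finset.univ.filter fun n => a n = k, ‖x n - μ k‖ ^ 2 := by
      rw [← Finset.sum_fiberwise Finset.univ a (fun n => ‖x n - μ (a n)‖ ^ 2)]
      apply Finset.sum_congr rfl
      intro k _
      apply Finset.sum_congr rfl
      intro n hn
      rw [Finset.mem_filter] at hn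
      rw [hn.2]
    rw [h1]
    symm
    apply Finset.sum_subset (Finset.filter_subset _ Finset.univ)
    intro k _ hk
    rw [Finset.mem_filter, not_and] at hk
    have : (Finset.univ.filter fun n => a n = k) = ∅ := by
      by_contra h
      exact hk (Finset.mem_univ k) (Finset.nonempty_of_ne_empty h)
    rw [this, Finset.sum_empty]
  -- key: for any μ and a, cluster sums with μ k replaced by means are smaller
  have hmean : ∀ (μ : Fin K → EuclideanSpace ℝ (Fin D)) (a : Fin N → Fin K),
      partitionObjective x a
        ≤ ∑ k ∈ Finset.univ.filter fun k => (Finset.univ.filter fun n => a n = k).Nonempty,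
            ∑ n ∈ Finset.univ.filter fun n => a n = k, ‖x n - μ k‖ ^ 2 := by
    intro μ a
    apply Finset.sum_le_sum
    intro k _
    exact mean_min _ x (μ k)
  -- (A) for each a : F (clusterMean x a) ≤ partitionObjective x a
  have hA : ∀ a : Fin N → Fin K, F (clusterMean x a) ≤ partitionObjective x a := by
    intro a
    calc F (clusterMean x a)
        ≤ ∑ n, ‖x n - clusterMean x a (a n)‖ ^ 2 :=
          Finset.sum_le_sum fun n _ => ciInf_le (Finite.bddBelow_range _) (a n)
      _ = partitionObjective x a := by
          rw [hgroup (clusterMean x a) a, partitionObjective]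
  -- (B) for each μ : ∃ a, partitionObjective x a ≤ F μ
  have hB : ∀ μ : Fin K → EuclideanSpace ℝ (Fin D),
      ∃ a : Fin N → Fin K, partitionObjective x a ≤ F μ := by
    intro μ
    choose a ha using hinner μ
    refine ⟨a, ?_⟩
    have : F μ = ∑ n, ‖x n - μ (a n)‖ ^ 2 :=
      Finset.sum_congr rfl fun n _ => ha n
    rw [this, hgroup μ a]
    exact hmean μ a
  -- the assignment infimum is a minimum
  obtain ⟨a₀, ha₀⟩ := Finite.exists_min fun a : Fin N → Fin K => partitionObjective x a
  have haInf : (⨅ a : Fin N → Fin K, partitionObjective x a) = partitionObjective x a₀ :=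
    le_antisymm (ciInf_le (Finite.bddBelow_range _) a₀) (le_ciInf ha₀)
  have heq : (⨅ μ, F μ) = ⨅ a : Fin N → Fin K, partitionObjective x a := by
    apply le_antisymm
    · rw [haInf]
      exact le_trans (ciInf_le hbdd (clusterMean x a₀)) (hA a₀)
    · apply le_ciInf
      intro μ
      obtain ⟨a, ha⟩ := hB μ
      rw [haInf]
      exact le_trans (ha₀ a) ha
  refine ⟨heq, ⟨clusterMean x a₀, le_antisymm ?_ (ciInf_le hbdd _)⟩⟩
  calc F (clusterMean x a₀) ≤ partitionObjective x a₀ := hA a₀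
    _ = ⨅ μ, F μ := by rw [heq, haInf]
end

section
/- Let x_1, ..., x_N be points in ℝ^D and let K ≥ 1. Then the infimum over all centroid tuples (μ_1, ..., μ_K) ∈ (ℝ^D)^K of ∑_{n=1}^N min_{c ∈ {1,...,K}} ‖x_n − μ_c‖² equals the minimum over all assignment functions a : {1,...,N} → {1,...,K} of ∑_{k : a^{-1}(k) ≠ ∅} (1/(2|a^{-1}(k)|)) ∑_{n, n' ∈ a^{-1}(k)} ‖x_n − x_{n'}‖². (Equivalence of explicit centroid K-means and implicit pairwise-distance K-means.) -/
open Finset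

/-- The implicit (pairwise-distance) K-means objective of an assignment `a`: for each
nonempty cluster, the sum of pairwise squared distances among its members divided by
twice the cluster size. -/
noncomputable def pairwiseObjective {D N K : ℕ} (x : Fin N → EuclideanSpace ℝ (Fin D))
    (a : Fin N → Fin K) : ℝ :=
  ∑ k ∈ Finset.univ.filter fun k => (Finset.univ.filter fun n => a n = k).Nonempty,
    (1 / (2 * ((Finset.univ.filter fun n => a n = k).card : ℝ))) *
      ∑ n ∈ Finset.univ.filter fun n => a n = k,
        ∑ n' ∈ Finset.univ.filter fun n' => a n' = k, ‖x n - x n'‖ ^ 2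

section helpers

variable {ι E : Type*} [NormedAddCommGroup E] [InnerProductSpace ℝ E]

noncomputable def fmean (x : ι → E) (s : Finset ι) : E :=
  (s.card : ℝ)⁻¹ • ∑ m ∈ s, x m

lemma sum_sub_fmean (x : ι → E) (s : Finset ι) (hs : s.Nonempty) :
    ∑ n ∈ s, (x n - fmean x s) = 0 := by
  rw [Finset.sum_sub_distrib, Finset.sum_const, sub_eq_zero, fmean,
    ← Nat.cast_smul_eq_nsmul ℝ, smul_smul,
    mul_inv_cancel₀ (by exact_mod_cast Finset.card_ne_zero.mpr hs), one_smul]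

lemma fmean_min (x : ι → E) (s : Finset ι) (hs : s.Nonempty) (μ : E) :
    ∑ n ∈ s, ‖x n - fmean x s‖ ^ 2 ≤ ∑ n ∈ s, ‖x n - μ‖ ^ 2 := by
  have hexp : ∀ n, ‖x n - μ‖ ^ 2
      = ‖x n - fmean x s‖ ^ 2 + 2 * (inner ℝ (x n - fmean x s) (fmean x s - μ) : ℝ) +
        ‖fmean x s - μ‖ ^ 2 := by
    intro n
    have h : x n - μ = (x n - fmean x s) + (fmean x s - μ) := by abel
    rw [h, norm_add_sq_real]
  calc ∑ n ∈ s, ‖x n - fmean x s‖ ^ 2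
      ≤ ∑ n ∈ s, ‖x n - fmean x s‖ ^ 2
        + (2 * (inner ℝ (∑ n ∈ s, (x n - fmean x s)) (fmean x s - μ) : ℝ) +
          s.card * ‖fmean x s - μ‖ ^ 2) := by
        rw [sum_sub_fmean x s hs, inner_zero_left, mul_zero, zero_add]
        nlinarith [sq_nonneg ‖fmean x s - μ‖, Nat.cast_nonneg (α := ℝ) s.card]
    _ = ∑ n ∈ s, ‖x n - μ‖ ^ 2 := by
        simp only [hexp]
        rw [Finset.sum_add_distrib, Finset.sum_add_distrib, Finset.sum_const,
          sum_inner, nsmul_eq_mul, Finset.mul_sum]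
        ring

lemma pairwise_sum_eq (x : ι → E) (s : Finset ι) (hs : s.Nonempty) :
    ∑ n ∈ s, ∑ n' ∈ s, ‖x n - x n'‖ ^ 2
      = 2 * s.card * ∑ n ∈ s, ‖x n - fmean x s‖ ^ 2 := by
  have hexp : ∀ n n', ‖x n - x n'‖ ^ 2
      = ‖x n - fmean x s‖ ^ 2 - 2 * (inner ℝ (x n - fmean x s) (x n' - fmean x s) : ℝ) +
        ‖x n' - fmean x s‖ ^ 2 := by
    intro n n'
    have h : x n - x n' = (x n - fmean x s) - (x n' - fmean x s) := by abel
    rw [h, norm_sub_sq_real]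
  calc ∑ n ∈ s, ∑ n' ∈ s, ‖x n - x n'‖ ^ 2
      = ∑ n ∈ s, (s.card * ‖x n - fmean x s‖ ^ 2 -
          2 * (inner ℝ (x n - fmean x s) (∑ n' ∈ s, (x n' - fmean x s)) : ℝ) +
          ∑ n' ∈ s, ‖x n' - fmean x s‖ ^ 2) := by
        refine Finset.sum_congr rfl fun n _ => ?_
        simp only [hexp]
        rw [Finset.sum_add_distrib, Finset.sum_sub_distrib, Finset.sum_const,
          inner_sum, nsmul_eq_mul, Finset.mul_sum]
    _ = 2 * s.card * ∑ n ∈ s, ‖x n - fmean x s‖ ^ 2 := by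
        rw [sum_sub_fmean x s hs]
        simp only [inner_zero_right, mul_zero, sub_zero]
        rw [Finset.sum_add_distrib, Finset.sum_const, nsmul_eq_mul,
          ← Finset.mul_sum]
        ring

end helpers

lemma pairwiseObjective_eq {D N K : ℕ} (x : Fin N → EuclideanSpace ℝ (Fin D))
    (a : Fin N → Fin K) :
    pairwiseObjective x a
      = ∑ k ∈ Finset.univ.filter fun k => (Finset.univ.filter fun n => a n = k).Nonempty,
          ∑ n ∈ Finset.univ.filter fun n => a n = k,
            ‖x n - fmean x (Finset.univ.filter fun n => a n = k)‖ ^ 2 := by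
  unfold pairwiseObjective
  refine Finset.sum_congr rfl fun k hk => ?_
  rw [Finset.mem_filter] at hk
  rw [pairwise_sum_eq x _ hk.2]
  have hc : (((Finset.univ.filter fun n => a n = k).card : ℝ)) ≠ 0 := by
    exact_mod_cast Finset.card_ne_zero.mpr hk.2
  field_simp

lemma sum_assign {D N K : ℕ} (x : Fin N → EuclideanSpace ℝ (Fin D))
    (a : Fin N → Fin K) (μ : Fin K → EuclideanSpace ℝ (Fin D)) :
    ∑ n, ‖x n - μ (a n)‖ ^ 2
      = ∑ k ∈ Finset.univ.filter fun k => (Finset.univ.filter fun n => a n = k).Nonempty,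
          ∑ n ∈ Finset.univ.filter fun n => a n = k, ‖x n - μ k‖ ^ 2 := by
  rw [← Finset.sum_fiberwise Finset.univ a fun n => ‖x n - μ (a n)‖ ^ 2]
  rw [← Finset.sum_filter_of_ne (p := fun k => (Finset.univ.filter fun n => a n = k).Nonempty)
    (fun k _ h => by
      by_contra hne
      rw [Finset.not_nonempty_iff_eq_empty] at hne
      rw [hne, Finset.sum_empty] at h
      exact h rfl)]
  exact Finset.sum_congr rfl fun k _ => Finset.sum_congr rfl fun n hn => by
    rw [(Finset.mem_filter.mp hn).2]


/-- The infimum over centroid tuples `(μ_1, ..., μ_K)` of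
`∑ n, min_c ‖x n - μ c‖²` equals the minimum over assignment functions `a` of the
implicit (pairwise-distance) K-means objective. -/
theorem kmeans_explicit_eq_implicit {D N K : ℕ} (hK : 1 ≤ K)
    (x : Fin N → EuclideanSpace ℝ (Fin D)) :
    (⨅ μ : Fin K → EuclideanSpace ℝ (Fin D), ∑ n, ⨅ c, ‖x n - μ c‖ ^ 2)
      = ⨅ a : Fin N → Fin K, pairwiseObjective x a := by
  haveI : Nonempty (Fin K) := ⟨⟨0, hK⟩⟩
  have hbddμ : BddBelow (Set.range fun μ : Fin K → EuclideanSpace ℝ (Fin D) =>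
      ∑ n, ⨅ c, ‖x n - μ c‖ ^ 2) := by
    refine ⟨0, fun y hy => ?_⟩
    obtain ⟨μ, rfl⟩ := hy
    exact Finset.sum_nonneg fun n _ => le_ciInf fun c => by positivity
  have hbdda : BddBelow (Set.range fun a : Fin N → Fin K => pairwiseObjective x a) :=
    (Set.finite_range _).bddBelow
  apply le_antisymm
  · refine le_ciInf fun a => ?_
    have h1 : (⨅ μ : Fin K → EuclideanSpace ℝ (Fin D), ∑ n, ⨅ c, ‖x n - μ c‖ ^ 2)
        ≤ ∑ n, ⨅ c, ‖x n - fmean x (Finset.univ.filter fun m => a m = c)‖ ^ 2 :=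
      ciInf_le hbddμ _
    refine h1.trans ?_
    have h2 : ∑ n, (⨅ c, ‖x n - fmean x (Finset.univ.filter fun m => a m = c)‖ ^ 2)
        ≤ ∑ n, ‖x n - fmean x (Finset.univ.filter fun m => a m = a n)‖ ^ 2 :=
      Finset.sum_le_sum fun n _ => ciInf_le ((Set.finite_range _).bddBelow) (a n)
    refine h2.trans_eq ?_
    rw [sum_assign x a fun k => fmean x (Finset.univ.filter fun m => a m = k),
      pairwiseObjective_eq x a]
  · refine le_ciInf fun μ => ?_
    have hmin : ∀ n : Fin N, ∃ c, ∀ c', ‖x n - μ c‖ ^ 2 ≤ ‖x n - μ c'‖ ^ 2 :=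
      fun n => Finite.exists_min _
    choose a ha using hmin
    calc (⨅ a : Fin N → Fin K, pairwiseObjective x a) ≤ pairwiseObjective x a :=
          ciInf_le hbdda a
      _ ≤ ∑ n, ‖x n - μ (a n)‖ ^ 2 := by
          rw [sum_assign x a μ, pairwiseObjective_eq x a]
          exact Finset.sum_le_sum fun k hk =>
            fmean_min x _ (Finset.mem_filter.mp hk).2 (μ k)
      _ ≤ ∑ n, ⨅ c, ‖x n - μ c‖ ^ 2 :=
          Finset.sum_le_sum fun n _ => le_ciInf (ha n)
end

section
/- Let A and B be real symmetric positive semidefinite K×K matrices, and let λ_1(A), ..., λ_K(A) denote the eigenvalues of A (with multiplicity). Then ‖A + B − I‖_F² ≥ ‖B − I‖_F² + ∑_{i=1}^K (λ_i(A) − 1)² − K, where ‖·‖_F is the Frobenius norm and I is the K×K identity matrix. -/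
open Matrix Finset

lemma trace_tmul_self_nonneg {m n : ℕ} (N : Matrix (Fin m) (Fin n) ℝ) :
    0 ≤ (Nᵀ * N).trace := by
  rw [Matrix.trace]
  refine Finset.sum_nonneg fun i _ => ?_
  simp only [Matrix.diag_apply, Matrix.mul_apply, Matrix.transpose_apply]
  exact Finset.sum_nonneg fun k _ => mul_self_nonneg _

lemma trace_mul_psd_nonneg {n : ℕ} {A B : Matrix (Fin n) (Fin n) ℝ}
    (hA : A.PosSemidef) (hB : B.PosSemidef) : 0 ≤ (A * B).trace := by
  obtain ⟨L, rfl⟩ : ∃ L : Matrix (Fin n) (Fin n) ℝ, A = Lᴴ * L := by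
    open scoped MatrixOrder Matrix.Norms.L2Operator in
    exact CStarAlgebra.nonneg_iff_eq_star_mul_self.mp hA.nonneg
  obtain ⟨M, rfl⟩ : ∃ M : Matrix (Fin n) (Fin n) ℝ, B = Mᴴ * M := by
    open scoped MatrixOrder Matrix.Norms.L2Operator in
    exact CStarAlgebra.nonneg_iff_eq_star_mul_self.mp hB.nonneg
  rw [Matrix.conjTranspose_eq_transpose_of_trivial, Matrix.conjTranspose_eq_transpose_of_trivial]
  have h1 : Lᵀ * L * (Mᵀ * M) = Lᵀ * (L * Mᵀ) * M := by
    simp [Matrix.mul_assoc]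
  have h2 : M * Lᵀ = (L * Mᵀ)ᵀ := by simp [Matrix.transpose_mul]
  rw [h1, Matrix.trace_mul_comm]
  simp only [← Matrix.mul_assoc]
  rw [h2, Matrix.mul_assoc]
  exact trace_tmul_self_nonneg _

lemma trace_eq_sum_eigs {n : ℕ} {A : Matrix (Fin n) (Fin n) ℝ}
    (hA : A.IsHermitian) : A.trace = ∑ i, hA.eigenvalues i := by
  conv_lhs => rw [hA.spectral_theorem, Unitary.conjStarAlgAut_apply]
  rw [Matrix.trace_mul_comm]
  simp only [← Matrix.mul_assoc]
  rw [(Matrix.mem_unitaryGroup_iff').mp (hA.eigenvectorUnitary).2, Matrix.one_mul,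
    Matrix.trace_diagonal]
  simp

lemma trace_sq_eq_sum_eigs_sq {n : ℕ} {A : Matrix (Fin n) (Fin n) ℝ}
    (hA : A.IsHermitian) : (A * A).trace = ∑ i, hA.eigenvalues i ^ 2 := by
  nth_rewrite 1 [hA.spectral_theorem]
  rw [Unitary.conjStarAlgAut_apply]
  rw [Matrix.trace_mul_comm]
  simp only [← Matrix.mul_assoc]
  rw [Matrix.trace_mul_comm]
  simp only [← Matrix.mul_assoc]
  have hD : star (hA.eigenvectorUnitary : Matrix (Fin n) (Fin n) ℝ) * A * (hA.eigenvectorUnitary : Matrix (Fin n) (Fin n) ℝ)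
      = diagonal (RCLike.ofReal ∘ hA.eigenvalues) := by
    simpa using hA.conjStarAlgAut_star_eigenvectorUnitary
  rw [hD, Matrix.diagonal_mul_diagonal, Matrix.trace_diagonal]
  simp [sq]

/-- For real symmetric positive semidefinite `K×K` matrices `A` and `B`
with eigenvalues `λ_i(A)`, one has
`‖A + B − I‖_F² ≥ ‖B − I‖_F² + ∑ i, (λ_i(A) − 1)² − K`,
where the squared Frobenius norm of `M` is `∑ i j, (M i j)²`. -/
theorem frobenius_lower_bound {K : ℕ} (A B : Matrix (Fin K) (Fin K) ℝ)
    (hA : A.PosSemidef) (hB : B.PosSemidef) :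
    (∑ i, ∑ j, ((B - 1) i j) ^ 2) + (∑ i, (hA.isHermitian.eigenvalues i - 1) ^ 2) - (K : ℝ)
      ≤ ∑ i, ∑ j, ((A + B - 1) i j) ^ 2 := by
  have hBsymm : ∀ i j, B j i = B i j := fun i j => by
    conv_lhs => rw [← hB.isHermitian]
    simp [Matrix.conjTranspose_apply]
  have hASymm : ∀ i j, A j i = A i j := fun i j => by
    conv_lhs => rw [← hA.isHermitian]
    simp [Matrix.conjTranspose_apply]
  -- inner product of A and B is nonneg
  have hAB : 0 ≤ ∑ i, ∑ j, A i j * B i j := by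
    have h := trace_mul_psd_nonneg hA hB
    rw [Matrix.trace] at h
    simpa [Matrix.diag_apply, Matrix.mul_apply, hBsymm] using h
  -- trace of A
  have htr : ∑ i, A i i = ∑ i, hA.isHermitian.eigenvalues i := by
    have := trace_eq_sum_eigs hA.isHermitian
    rwa [Matrix.trace] at this
  -- Frobenius norm squared of A
  have hsq : ∑ i, ∑ j, (A i j) ^ 2 = ∑ i, hA.isHermitian.eigenvalues i ^ 2 := by
    have h := trace_sq_eq_sum_eigs_sq hA.isHermitian
    rw [Matrix.trace] at h
    rw [← h]
    refine Finset.sum_congr rfl fun i _ => ?_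
    simp [Matrix.diag_apply, Matrix.mul_apply, sq, hASymm]
  have hone : ∀ i, ∑ j, A i j * (1 : Matrix (Fin K) (Fin K) ℝ) i j = A i i := by
    intro i
    simp [Matrix.one_apply, mul_ite]
  have heig : ∑ i, (hA.isHermitian.eigenvalues i - 1) ^ 2
      = (∑ i, hA.isHermitian.eigenvalues i ^ 2) - 2 * (∑ i, hA.isHermitian.eigenvalues i)
        + (K : ℝ) := by
    rw [Finset.mul_sum, ← Finset.sum_sub_distrib]
    have : (K : ℝ) = ∑ _i : Fin K, (1 : ℝ) := by simp
    rw [this, ← Finset.sum_add_distrib]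
    exact Finset.sum_congr rfl fun i _ => by ring
  have key : ∑ i, ∑ j, ((A + B - 1) i j) ^ 2
      = (∑ i, ∑ j, ((B - 1) i j) ^ 2) + 2 * (∑ i, ∑ j, A i j * B i j)
        - 2 * (∑ i, A i i) + (∑ i, ∑ j, (A i j) ^ 2) := by
    have pt : ∀ i j, ((A + B - 1) i j) ^ 2
        = ((B - 1) i j) ^ 2 + 2 * (A i j * B i j)
          - 2 * (A i j * (1 : Matrix (Fin K) (Fin K) ℝ) i j) + (A i j) ^ 2 := by
      intro i j
      simp only [Matrix.sub_apply, Matrix.add_apply]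
      ring
    rw [Finset.sum_congr rfl fun i _ => Finset.sum_congr rfl fun j _ => pt i j]
    simp only [Finset.sum_add_distrib, Finset.sum_sub_distrib, ← Finset.mul_sum, hone]
  rw [key, heig]
  linarith
end

section
/- Let v ∈ ℝ^K and fix k ∈ {1,...,K}. Then lim_{σ → 0⁺} ( −σ · log( softmax(v/σ)_k ) ) = (max_{j=1,...,K} v_j) − v_k. -/
/-- `softmax v k = exp (v k) / ∑ j, exp (v j)`. -/
noncomputable def softmax {K : ℕ} (v : Fin K → ℝ) (k : Fin K) : ℝ :=
  Real.exp (v k) / ∑ j, Real.exp (v j)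

/-- For any `v ∈ ℝ^K` and `k`,
`lim_{σ → 0⁺} (−σ · log (softmax (v/σ) k)) = max_j v_j − v_k`. -/
theorem neg_temp_log_softmax_tendsto {K : ℕ} (v : Fin K → ℝ) (k : Fin K) :
    Filter.Tendsto (fun σ : ℝ => -σ * Real.log (softmax (fun j => v j / σ) k))
      (nhdsWithin 0 (Set.Ioi 0))
      (nhds ((Finset.univ.sup' ⟨k, Finset.mem_univ k⟩ v) - v k)) := by
  have hne : (Finset.univ : Finset (Fin K)).Nonempty := ⟨k, Finset.mem_univ k⟩
  set M := Finset.univ.sup' ⟨k, Finset.mem_univ k⟩ v with hM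
  obtain ⟨i, -, hi⟩ := Finset.exists_mem_eq_sup' ⟨k, Finset.mem_univ k⟩ v
  set S : ℝ → ℝ := fun σ => ∑ j, Real.exp ((v j - M) / σ) with hS
  have hSpos : ∀ σ : ℝ, 0 < S σ :=
    fun σ => Finset.sum_pos (fun j _ => Real.exp_pos _) hne
  have key : ∀ σ ∈ Set.Ioi (0:ℝ),
      -σ * Real.log (softmax (fun j => v j / σ) k)
        = (M - v k) + σ * Real.log (S σ) := by
    intro σ hσ
    have hσ0 : (σ:ℝ) ≠ 0 := ne_of_gt hσ
    have hsum : (∑ j, Real.exp (v j / σ)) = Real.exp (M / σ) * S σ := by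
      rw [hS, Finset.mul_sum]
      refine Finset.sum_congr rfl fun j _ => ?_
      rw [← Real.exp_add]
      congr 1
      field_simp
      ring
    have hsumpos : (0:ℝ) < ∑ j, Real.exp (v j / σ) :=
      Finset.sum_pos (fun j _ => Real.exp_pos _) hne
    unfold softmax
    rw [Real.log_div (Real.exp_ne_zero _) (ne_of_gt hsumpos), Real.log_exp,
      hsum, Real.log_mul (Real.exp_ne_zero _) (ne_of_gt (hSpos σ)), Real.log_exp]
    field_simp
    ring
  have hEq : (fun σ : ℝ => -σ * Real.log (softmax (fun j => v j / σ) k))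
      =ᶠ[nhdsWithin 0 (Set.Ioi 0)]
      (fun σ : ℝ => (M - v k) + σ * Real.log (S σ)) :=
    Filter.eventually_of_mem self_mem_nhdsWithin key
  rw [Filter.tendsto_congr' hEq]
  have h0 : Filter.Tendsto (fun σ : ℝ => σ * Real.log (S σ))
      (nhdsWithin 0 (Set.Ioi 0)) (nhds 0) := by
    have hg : Filter.Tendsto (fun σ : ℝ => σ * Real.log K)
        (nhdsWithin 0 (Set.Ioi 0)) (nhds 0) := by
      have := ((Filter.tendsto_id.mono_left (nhdsWithin_le_nhds
        (a := (0:ℝ)) (s := Set.Ioi 0))).mul_const (Real.log K))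
      simpa using this
    refine squeeze_zero' ?_ ?_ hg
    · filter_upwards [self_mem_nhdsWithin] with σ hσ
      have h1 : (1:ℝ) ≤ S σ := by
        have : Real.exp ((v i - M) / σ) ≤ S σ :=
          Finset.single_le_sum (f := fun j => Real.exp ((v j - M) / σ))
            (fun j _ => (Real.exp_pos _).le) (Finset.mem_univ i)
        have hvi : v i = M := hi.symm
        rw [show (v i - M)/σ = 0 by rw [hvi]; simp, Real.exp_zero] at this
        exact this
      exact mul_nonneg (le_of_lt hσ) (Real.log_nonneg h1)
    · filter_upwards [self_mem_nhdsWithin] with σ hσ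
      have hSK : S σ ≤ (K : ℝ) := by
        calc S σ ≤ ∑ _j : Fin K, (1:ℝ) := by
              refine Finset.sum_le_sum fun j _ => ?_
              rw [← Real.exp_zero]
              apply Real.exp_le_exp.2
              refine div_nonpos_of_nonpos_of_nonneg ?_ (le_of_lt hσ)
              exact sub_nonpos.2 (by rw [hM]; exact Finset.le_sup' v (Finset.mem_univ j))
          _ = K := by simp
      exact mul_le_mul_of_nonneg_left
        (Real.log_le_log (hSpos σ) hSK) (le_of_lt hσ)
  have := Filter.Tendsto.add (tendsto_const_nhds
    (x := M - v k) (f := nhdsWithin (0:ℝ) (Set.Ioi 0))) h0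
  simpa using this
end

section
/- Let x, μ_1, ..., μ_K be unit vectors in ℝ^D, let W = [μ_1, ..., μ_K] so that (Wᵀx)_j = ⟨μ_j, x⟩, and fix k ∈ {1,...,K}. Then lim_{σ → 0⁺} σ · H( e_k, softmax(Wᵀx/σ) ) = (1/2)·( ‖x − μ_k‖² − min_{c=1,...,K} ‖x − μ_c‖² ), where H(p, q) = −∑_{j=1}^K p_j log q_j is the cross-entropy and e_k is the one-hot vector at coordinate k. -/
open RealInnerProductSpace

/-- Cross-entropy `H(p, q) = −∑ j, p j * log (q j)`. -/
noncomputable def crossEntropy {K : ℕ} (p q : Fin K → ℝ) : ℝ :=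
  -∑ j, p j * Real.log (q j)

/-- The one-hot vector `e_k`. -/
def onehot {K : ℕ} (k : Fin K) : Fin K → ℝ :=
  fun j => if j = k then 1 else 0

/-- For unit vectors `x, μ_1, ..., μ_K` in `ℝ^D`, with
`(Wᵀx)_j = ⟨μ_j, x⟩`, and any fixed `k`,
`lim_{σ → 0⁺} σ · H(e_k, softmax (Wᵀx/σ)) = (1/2)(‖x − μ_k‖² − min_c ‖x − μ_c‖²)`. -/
theorem temp_cross_entropy_tendsto {D K : ℕ} (x : EuclideanSpace ℝ (Fin D))
    (μ : Fin K → EuclideanSpace ℝ (Fin D))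
    (hx : ‖x‖ = 1) (hμ : ∀ j, ‖μ j‖ = 1) (k : Fin K) :
    Filter.Tendsto
      (fun σ : ℝ => σ * crossEntropy (onehot k) (softmax fun j => ⟪μ j, x⟫ / σ))
      (nhdsWithin 0 (Set.Ioi 0))
      (nhds ((1 / 2) * (‖x - μ k‖ ^ 2
        - Finset.univ.inf' ⟨k, Finset.mem_univ k⟩ fun c => ‖x - μ c‖ ^ 2))) := by
  classical
  set v : Fin K → ℝ := fun j => ⟪μ j, x⟫ with hv
  have hne : (Finset.univ : Finset (Fin K)).Nonempty := ⟨k, Finset.mem_univ k⟩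
  set M : ℝ := Finset.univ.sup' hne v with hM
  obtain ⟨j0, -, hj0⟩ := Finset.exists_mem_eq_sup' hne v
  have hle : ∀ j, v j ≤ M := fun j => Finset.le_sup' v (Finset.mem_univ j)
  have hnorm : ∀ c, ‖x - μ c‖ ^ 2 = 2 - 2 * v c := by
    intro c
    have := @norm_sub_sq_real (EuclideanSpace ℝ (Fin D)) _ _ x (μ c)
    rw [this, hx, hμ c, real_inner_comm]
    ring
  have hRHS : (1 / 2) * (‖x - μ k‖ ^ 2
      - Finset.univ.inf' hne fun c => ‖x - μ c‖ ^ 2) = M - v k := by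
    have hinf : (Finset.univ.inf' hne fun c => ‖x - μ c‖ ^ 2) = 2 - 2 * M := by
      apply le_antisymm
      · calc (Finset.univ.inf' hne fun c => ‖x - μ c‖ ^ 2) ≤ ‖x - μ j0‖ ^ 2 :=
              Finset.inf'_le _ (Finset.mem_univ j0)
          _ = 2 - 2 * M := by rw [hnorm j0, hM, hj0]
      · apply Finset.le_inf'
        intro c _
        rw [hnorm c]
        linarith [hle c]
    rw [hinf, hnorm k]
    ring
  rw [hRHS]
  set S : ℝ → ℝ := fun σ => ∑ j, Real.exp ((v j - M) / σ) with hS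
  have hSbound : ∀ σ : ℝ, 0 < σ → 1 ≤ S σ ∧ S σ ≤ K := by
    intro σ hσ
    constructor
    · have h1 : (1 : ℝ) = Real.exp ((v j0 - M) / σ) := by rw [← hj0, ← hM, sub_self, zero_div, Real.exp_zero]
      rw [h1]
      exact Finset.single_le_sum (f := fun j => Real.exp ((v j - M) / σ))
        (fun j _ => (Real.exp_pos _).le) (Finset.mem_univ j0)
    · calc S σ ≤ ∑ _j : Fin K, (1 : ℝ) := by
            apply Finset.sum_le_sum
            intro j _
            rw [Real.exp_le_one_iff]
            exact div_nonpos_of_nonpos_of_nonneg (by linarith [hle j]) hσ.le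
        _ = K := by simp
  have heq : ∀ σ ∈ Set.Ioi (0:ℝ),
      σ * crossEntropy (onehot k) (softmax fun j => ⟪μ j, x⟫ / σ)
        = σ * Real.log (S σ) + (M - v k) := by
    intro σ hσ
    have hσ0 : (σ:ℝ) ≠ 0 := ne_of_gt hσ
    have hSpos : 0 < S σ := lt_of_lt_of_le one_pos (hSbound σ hσ).1
    have hsum : ∑ j, Real.exp (v j / σ) = Real.exp (M / σ) * S σ := by
      rw [hS, Finset.mul_sum]
      apply Finset.sum_congr rfl
      intro j _
      rw [← Real.exp_add]
      congr 1
      field_simp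
      ring
    have hsumpos : 0 < ∑ j, Real.exp (v j / σ) := by
      rw [hsum]; exact mul_pos (Real.exp_pos _) hSpos
    have hCE : crossEntropy (onehot k) (softmax fun j => v j / σ)
        = Real.log (∑ j, Real.exp (v j / σ)) - v k / σ := by
      unfold crossEntropy onehot softmax
      simp only [ite_mul, one_mul, zero_mul, Finset.sum_ite_eq', Finset.mem_univ, if_true]
      rw [Real.log_div (Real.exp_ne_zero _) (ne_of_gt hsumpos), Real.log_exp]
      ring
    show σ * crossEntropy (onehot k) (softmax fun j => v j / σ) = _
    rw [hCE, hsum, Real.log_mul (Real.exp_ne_zero _) (ne_of_gt hSpos), Real.log_exp]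
    field_simp
    ring
  have hzero : Filter.Tendsto (fun σ : ℝ => σ * Real.log (S σ))
      (nhdsWithin 0 (Set.Ioi 0)) (nhds 0) := by
    apply tendsto_of_tendsto_of_tendsto_of_le_of_le'
      (g := fun _ : ℝ => (0:ℝ)) (h := fun σ : ℝ => σ * Real.log K)
      tendsto_const_nhds
    · have : Filter.Tendsto (fun σ : ℝ => σ * Real.log K) (nhds 0) (nhds (0 * Real.log K)) :=
        (Filter.tendsto_id.mul_const _)
      simpa using this.mono_left nhdsWithin_le_nhds
    · filter_upwards [self_mem_nhdsWithin] with σ hσ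
      have hσ : (0:ℝ) < σ := hσ
      have : 0 ≤ Real.log (S σ) := Real.log_nonneg (hSbound σ hσ).1
      positivity
    · filter_upwards [self_mem_nhdsWithin] with σ hσ
      have hσ : (0:ℝ) < σ := hσ
      have h1 : Real.log (S σ) ≤ Real.log K :=
        Real.log_le_log (lt_of_lt_of_le one_pos (hSbound σ hσ).1) (hSbound σ hσ).2
      exact mul_le_mul_of_nonneg_left h1 hσ.le
  have hfinal : Filter.Tendsto (fun σ : ℝ => σ * Real.log (S σ) + (M - v k))
      (nhdsWithin 0 (Set.Ioi 0)) (nhds (M - v k)) := by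
    simpa using hzero.add (tendsto_const_nhds (x := M - v k))
  apply hfinal.congr'
  filter_upwards [self_mem_nhdsWithin] with σ hσ
  exact (heq σ hσ).symm
end
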